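/- Let α ≠ 0 and E = H¹(𝕋_L, ℂ). There exists δ > 0 such that any W ∈ E with inf_{γ ∈ [0,2π)} ‖W - e^{iγ}α‖_{H¹} ≤ δ can be written as e^{iγ}W = α + V for some γ ∈ [0,2π) and V ∈ E with ∫₀^L Im V dx = 0; moreover there is C > 0 with d(W, O) ≤ ‖V‖ ≤ C d(W, O), where O = {e^{iγ}α : γ ∈ [0,2π)} and d(W, O) = inf_γ ‖W - e^{iγ}α‖_{H¹}. -/

import Mathlib

open MeasureTheory

/-- The `H¹` norm on `(0, L)` of an (`L`-periodic, `C¹`) function. -/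
noncomputable def normH1 (L : ℝ) (u : ℝ → ℂ) : ℝ :=
  Real.sqrt (∫ x in (0:ℝ)..L, (‖deriv u x‖ ^ 2 + ‖u x‖ ^ 2))

/-- The distance in `H¹` from `W` to the orbit `O = {e^{iγ} α : γ ∈ ℝ}`. -/
noncomputable def dOrb (L : ℝ) (α : ℝ) (W : ℝ → ℂ) : ℝ :=
  sInf {r : ℝ | ∃ γ : ℝ, r = normH1 L (fun x => W x - Complex.exp (Complex.I * (γ:ℂ)) * (α:ℂ))}

lemma aux_abs_exp (t : ℝ) : ‖Complex.exp (Complex.I * t)‖ = 1 := by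
  simp [Complex.norm_exp]

lemma aux_norm_exp_mul (t : ℝ) (z : ℂ) :
    ‖Complex.exp (Complex.I * t) * z‖ = ‖z‖ := by
  rw [norm_mul, aux_abs_exp, one_mul]

lemma aux_conj_exp (t : ℝ) :
    (starRingEnd ℂ) (Complex.exp (Complex.I * t)) = Complex.exp (-(Complex.I * t)) := by
  rw [← Complex.exp_conj]
  congr 1
  simp

lemma aux_int_re (L : ℝ) (hL : 0 ≤ L) (f : ℝ → ℂ) (hf : Continuous f) :
    ∫ x in (0:ℝ)..L, (f x).re = (∫ x in (0:ℝ)..L, f x).re := by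
  rw [intervalIntegral.integral_of_le hL, intervalIntegral.integral_of_le hL,
    ← RCLike.re_to_complex]
  exact integral_re hf.integrableOn_Ioc

lemma aux_int_im (L : ℝ) (hL : 0 ≤ L) (f : ℝ → ℂ) (hf : Continuous f) :
    ∫ x in (0:ℝ)..L, (f x).im = (∫ x in (0:ℝ)..L, f x).im := by
  rw [intervalIntegral.integral_of_le hL, intervalIntegral.integral_of_le hL,
    ← RCLike.im_to_complex]
  exact integral_im hf.integrableOn_Ioc

lemma aux_sq_norm_sub (e z : ℂ) (α : ℝ) (he : Complex.normSq e = 1) :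
    ‖z - e * α‖ ^ 2 = ‖z‖ ^ 2 + α ^ 2 - 2 * α * ((starRingEnd ℂ) e * z).re := by
  have h : z * ((starRingEnd ℂ) (e * (α:ℂ))) = (α:ℂ) * ((starRingEnd ℂ) e * z) := by
    rw [map_mul, Complex.conj_ofReal]; ring
  rw [Complex.sq_norm, Complex.normSq_sub, h, Complex.re_ofReal_mul,
    Complex.normSq_mul, he, Complex.normSq_ofReal, ← Complex.sq_norm z]
  ring

lemma aux_expand (L α : ℝ) (hL : 0 ≤ L) (W : ℝ → ℂ) (hW : ContDiff ℝ 1 W) (β : ℝ) :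
    (∫ x in (0:ℝ)..L, (‖deriv (fun x => W x - Complex.exp (Complex.I * (β:ℂ)) * (α:ℂ)) x‖ ^ 2
        + ‖W x - Complex.exp (Complex.I * (β:ℂ)) * (α:ℂ)‖ ^ 2))
    = ((∫ x in (0:ℝ)..L, (‖deriv W x‖ ^ 2 + ‖W x‖ ^ 2)) + α ^ 2 * L)
      - 2 * α * (Complex.exp (-(Complex.I * (β:ℂ))) * (∫ x in (0:ℝ)..L, W x)).re := by
  have hWc := hW.continuous
  have hW'c := hW.continuous_deriv le_rfl
  have he : Complex.normSq (Complex.exp (Complex.I * (β:ℂ))) = 1 := by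
    rw [← Complex.sq_norm, aux_abs_exp]; norm_num
  have hpt : ∀ x : ℝ, ‖deriv (fun x => W x - Complex.exp (Complex.I * (β:ℂ)) * (α:ℂ)) x‖ ^ 2
      + ‖W x - Complex.exp (Complex.I * (β:ℂ)) * (α:ℂ)‖ ^ 2
      = ((‖deriv W x‖ ^ 2 + ‖W x‖ ^ 2) + α ^ 2)
        - 2 * α * (Complex.exp (-(Complex.I * (β:ℂ))) * W x).re := by
    intro x
    rw [deriv_sub_const, aux_sq_norm_sub _ _ _ he, aux_conj_exp]
    ring
  have hc1 : Continuous fun x => ‖deriv W x‖ ^ 2 + ‖W x‖ ^ 2 :=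
    (hW'c.norm.pow 2).add (hWc.norm.pow 2)
  have hc2 : Continuous fun x : ℝ => (‖deriv W x‖ ^ 2 + ‖W x‖ ^ 2) + α ^ 2 :=
    hc1.add continuous_const
  have hc3 : Continuous fun x => (Complex.exp (-(Complex.I * (β:ℂ))) * W x).re :=
    (Complex.continuous_re.comp (continuous_const.mul hWc))
  simp only [hpt]
  rw [intervalIntegral.integral_sub (hc2.intervalIntegrable 0 L)
      ((continuous_const.fun_mul hc3).intervalIntegrable 0 L),
    intervalIntegral.integral_add (hc1.intervalIntegrable 0 L)
      ((continuous_const (y := α ^ 2)).intervalIntegrable 0 L),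
    intervalIntegral.integral_const, intervalIntegral.integral_const_mul,
    aux_int_re L hL _ (continuous_const.fun_mul hWc), ← intervalIntegral.integral_const_mul]
  simp [smul_eq_mul]
  ring
theorem stmt19 (L α : ℝ) (hL : 0 < L) (hα : α ≠ 0) :
    ∃ δ > 0, ∃ C > 0, ∀ W : ℝ → ℂ, ContDiff ℝ 1 W → Function.Periodic W L →
      dOrb L α W ≤ δ →
      ∃ γ : ℝ, 0 ≤ γ ∧ γ < 2 * Real.pi ∧
        ∃ V : ℝ → ℂ,
          (∀ x : ℝ, Complex.exp (Complex.I * (γ:ℂ)) * W x = (α:ℂ) + V x) ∧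
          (∫ x in (0:ℝ)..L, (V x).im) = 0 ∧
          dOrb L α W ≤ normH1 L V ∧ normH1 L V ≤ C * dOrb L α W := by
  refine ⟨1, one_pos, 1, one_pos, ?_⟩
  intro W hW _ _
  have hWc := hW.continuous
  set B : ℂ := ∫ x in (0:ℝ)..L, W x with hBdef
  set K : ℝ := (∫ x in (0:ℝ)..L, (‖deriv W x‖ ^ 2 + ‖W x‖ ^ 2)) + α ^ 2 * L with hKdef
  set s : ℝ := |α| / α with hsdef
  have hs1 : s * α = |α| := div_mul_cancel₀ _ hα
  have habs_s : |s| = 1 := by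
    rw [hsdef, abs_div, abs_abs, div_self (abs_ne_zero.mpr hα)]
  have hs0 : s ≠ 0 := by
    intro h; rw [h, abs_zero] at habs_s; norm_num at habs_s
  set γ₀ : ℝ := ((s:ℂ) * B).arg with hγ₀def
  -- key algebraic identity
  have hkey : Complex.exp (-(Complex.I * (γ₀:ℂ))) * B = ((s * ‖B‖ : ℝ) : ℂ) := by
    by_cases hB0 : B = 0
    · simp [hB0]
    · have habs : ‖(s:ℂ) * B‖ = ‖B‖ := by
        rw [norm_mul, Complex.norm_real, Real.norm_eq_abs, habs_s, one_mul]
      have h1 : Complex.exp (Complex.I * (γ₀:ℂ)) * (‖B‖ : ℂ) = (s:ℂ) * B := by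
        rw [mul_comm Complex.I ((γ₀:ℂ)), mul_comm, ← habs]
        exact Complex.norm_mul_exp_arg_mul_I _
      have hconj : Complex.exp (-(Complex.I * (γ₀:ℂ)))
          = (starRingEnd ℂ) (Complex.exp (Complex.I * (γ₀:ℂ))) := (aux_conj_exp γ₀).symm
      have habsne : (‖B‖ : ℂ) ≠ 0 := by
        exact_mod_cast (norm_ne_zero_iff.mpr hB0)
      apply mul_right_cancel₀ habsne
      calc Complex.exp (-(Complex.I * (γ₀:ℂ))) * B * (‖B‖ : ℂ)
          = (starRingEnd ℂ) (Complex.exp (Complex.I * (γ₀:ℂ)) * (‖B‖ : ℂ)) * B := by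
            rw [map_mul, Complex.conj_ofReal, hconj]; ring
        _ = ((s:ℂ) * (starRingEnd ℂ) B) * B := by rw [h1, map_mul, Complex.conj_ofReal]
        _ = (s:ℂ) * (B * (starRingEnd ℂ) B) := by ring
        _ = (s:ℂ) * ((Complex.normSq B : ℝ) : ℂ) := by rw [Complex.mul_conj]
        _ = ((s * ‖B‖ : ℝ) : ℂ) * (‖B‖ : ℂ) := by
            rw [← Complex.sq_norm]; push_cast; ring
    -- end hkey
  have hγ₀re : α * (Complex.exp (-(Complex.I * (γ₀:ℂ))) * B).re = |α| * ‖B‖ := by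
    rw [hkey, Complex.ofReal_re, ← mul_assoc, mul_comm α s, hs1]
  have hγ₀im : (Complex.exp (-(Complex.I * (γ₀:ℂ))) * B).im = 0 := by
    rw [hkey]; exact Complex.ofReal_im _
  set m : ℝ := K - 2 * (|α| * ‖B‖) with hmdef
  have hm_le : ∀ β : ℝ, m ≤ K - 2 * α * (Complex.exp (-(Complex.I * (β:ℂ))) * B).re := by
    intro β
    have habse : ‖Complex.exp (-(Complex.I * (β:ℂ))) * B‖ = ‖B‖ := by
      rw [norm_mul]
      have : ‖Complex.exp (-(Complex.I * (β:ℂ)))‖ = 1 := by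
        simp [Complex.norm_exp]
      rw [this, one_mul]
    have h1 : α * (Complex.exp (-(Complex.I * (β:ℂ))) * B).re ≤ |α| * ‖B‖ := by
      calc α * (Complex.exp (-(Complex.I * (β:ℂ))) * B).re
          ≤ |α * (Complex.exp (-(Complex.I * (β:ℂ))) * B).re| := le_abs_self _
        _ = |α| * |(Complex.exp (-(Complex.I * (β:ℂ))) * B).re| := abs_mul _ _
        _ ≤ |α| * ‖Complex.exp (-(Complex.I * (β:ℂ))) * B‖ := by
            gcongr; exact Complex.abs_re_le_norm _
        _ = |α| * ‖B‖ := by rw [habse]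
    rw [hmdef]; linarith
  have hm0 : 0 ≤ m := by
    have hexp := aux_expand L α hL.le W hW γ₀
    have hnn : 0 ≤ ∫ x in (0:ℝ)..L,
        (‖deriv (fun x => W x - Complex.exp (Complex.I * (γ₀:ℂ)) * (α:ℂ)) x‖ ^ 2
          + ‖W x - Complex.exp (Complex.I * (γ₀:ℂ)) * (α:ℂ)‖ ^ 2) :=
      intervalIntegral.integral_nonneg hL.le (fun x _ => by positivity)
    rw [hexp] at hnn
    rw [hmdef]; rw [← hBdef, ← hKdef] at hnn; linarith [hγ₀re]
  -- dOrb equals sqrt m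
  have hd : dOrb L α W = Real.sqrt m := by
    have hmemS : Real.sqrt m ∈ {r : ℝ | ∃ β : ℝ,
        r = normH1 L (fun x => W x - Complex.exp (Complex.I * (β:ℂ)) * (α:ℂ))} := by
      refine ⟨γ₀, ?_⟩
      unfold normH1
      rw [aux_expand L α hL.le W hW γ₀, ← hBdef, ← hKdef]
      congr 1
      rw [hmdef]; linarith [hγ₀re]
    unfold dOrb
    apply le_antisymm
    · exact csInf_le ⟨0, by rintro r ⟨β, rfl⟩; exact Real.sqrt_nonneg _⟩ hmemS
    · apply le_csInf ⟨_, hmemS⟩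
      rintro r ⟨β, rfl⟩
      unfold normH1
      rw [aux_expand L α hL.le W hW β, ← hBdef, ← hKdef]
      exact Real.sqrt_le_sqrt (hm_le β)
  -- the modulation angle
  set γ : ℝ := toIcoMod Real.two_pi_pos 0 (-γ₀) with hγdef
  have hmem := toIcoMod_mem_Ico' Real.two_pi_pos (-γ₀)
  have hdiff := toIcoMod_sub_self Real.two_pi_pos 0 (-γ₀)
  set n : ℤ := -(toIcoDiv Real.two_pi_pos 0 (-γ₀)) with hndef
  have hγeq : γ = -γ₀ + (n:ℝ) * (2 * Real.pi) := by
    have := hdiff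
    rw [zsmul_eq_mul] at this
    rw [hγdef, hndef]
    linarith [this]
  have hexpγ : Complex.exp (Complex.I * (γ:ℂ)) = Complex.exp (-(Complex.I * (γ₀:ℂ))) := by
    have harg : Complex.I * (γ:ℂ) = -(Complex.I * (γ₀:ℂ)) + (n:ℂ) * (2 * (Real.pi:ℂ) * Complex.I) := by
      rw [show (γ:ℂ) = -(γ₀:ℂ) + (n:ℂ) * (2 * (Real.pi:ℂ)) by exact_mod_cast congrArg (Complex.ofReal) hγeq]
      ring
    rw [harg, Complex.exp_add, Complex.exp_int_mul_two_pi_mul_I, mul_one]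
  refine ⟨γ, hmem.1, by simpa using hmem.2,
    fun x => Complex.exp (Complex.I * (γ:ℂ)) * W x - (α:ℂ), fun x => by ring, ?_, ?_, ?_⟩
  · -- imaginary part integral vanishes
    have hpt : ∀ x : ℝ, (Complex.exp (Complex.I * (γ:ℂ)) * W x - (α:ℂ)).im
        = (Complex.exp (Complex.I * (γ:ℂ)) * W x).im := by
      intro x; simp
    simp only [hpt]
    rw [aux_int_im L hL.le _ (continuous_const.fun_mul hWc),
      intervalIntegral.integral_const_mul, ← hBdef, hexpγ]
    exact hγ₀im
  · -- dOrb ≤ normH1 V (in fact equality)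
    have hVnorm : normH1 L (fun x => Complex.exp (Complex.I * (γ:ℂ)) * W x - (α:ℂ))
        = Real.sqrt m := by
      unfold normH1
      have hprod : Complex.exp (Complex.I * (γ:ℂ)) * Complex.exp (Complex.I * (γ₀:ℂ)) = 1 := by
        rw [hexpγ, ← Complex.exp_add]; simp
      have hpt : ∀ x : ℝ,
          ‖deriv (fun x => Complex.exp (Complex.I * (γ:ℂ)) * W x - (α:ℂ)) x‖ ^ 2
            + ‖Complex.exp (Complex.I * (γ:ℂ)) * W x - (α:ℂ)‖ ^ 2
          = ‖deriv (fun x => W x - Complex.exp (Complex.I * (γ₀:ℂ)) * (α:ℂ)) x‖ ^ 2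
            + ‖W x - Complex.exp (Complex.I * (γ₀:ℂ)) * (α:ℂ)‖ ^ 2 := by
        intro x
        have hdV : deriv (fun x => Complex.exp (Complex.I * (γ:ℂ)) * W x - (α:ℂ)) x
            = Complex.exp (Complex.I * (γ:ℂ)) * deriv W x := by
          rw [deriv_sub_const, deriv_const_mul _ ((hW.differentiable one_ne_zero) x)]
        have hVx : Complex.exp (Complex.I * (γ:ℂ)) * W x - (α:ℂ)
            = Complex.exp (Complex.I * (γ:ℂ)) * (W x - Complex.exp (Complex.I * (γ₀:ℂ)) * (α:ℂ)) := by
          rw [mul_sub, ← mul_assoc, hprod, one_mul]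
        rw [hdV, deriv_sub_const, hVx, aux_norm_exp_mul, aux_norm_exp_mul]
      rw [intervalIntegral.integral_congr (fun x _ => hpt x),
        aux_expand L α hL.le W hW γ₀, ← hBdef, ← hKdef]
      congr 1
      rw [hmdef]; linarith [hγ₀re]
    rw [hd, hVnorm]
  · -- normH1 V ≤ C * dOrb
    have hVnorm : normH1 L (fun x => Complex.exp (Complex.I * (γ:ℂ)) * W x - (α:ℂ))
        = Real.sqrt m := by
      unfold normH1
      have hprod : Complex.exp (Complex.I * (γ:ℂ)) * Complex.exp (Complex.I * (γ₀:ℂ)) = 1 := by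
        rw [hexpγ, ← Complex.exp_add]; simp
      have hpt : ∀ x : ℝ,
          ‖deriv (fun x => Complex.exp (Complex.I * (γ:ℂ)) * W x - (α:ℂ)) x‖ ^ 2
            + ‖Complex.exp (Complex.I * (γ:ℂ)) * W x - (α:ℂ)‖ ^ 2
          = ‖deriv (fun x => W x - Complex.exp (Complex.I * (γ₀:ℂ)) * (α:ℂ)) x‖ ^ 2
            + ‖W x - Complex.exp (Complex.I * (γ₀:ℂ)) * (α:ℂ)‖ ^ 2 := by
        intro x
        have hdV : deriv (fun x => Complex.exp (Complex.I * (γ:ℂ)) * W x - (α:ℂ)) x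
            = Complex.exp (Complex.I * (γ:ℂ)) * deriv W x := by
          rw [deriv_sub_const, deriv_const_mul _ ((hW.differentiable one_ne_zero) x)]
        have hVx : Complex.exp (Complex.I * (γ:ℂ)) * W x - (α:ℂ)
            = Complex.exp (Complex.I * (γ:ℂ)) * (W x - Complex.exp (Complex.I * (γ₀:ℂ)) * (α:ℂ)) := by
          rw [mul_sub, ← mul_assoc, hprod, one_mul]
        rw [hdV, deriv_sub_const, hVx, aux_norm_exp_mul, aux_norm_exp_mul]
      rw [intervalIntegral.integral_congr (fun x _ => hpt x),
        aux_expand L α hL.le W hW γ₀, ← hBdef, ← hKdef]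
      congr 1
      rw [hmdef]; linarith [hγ₀re]
    rw [hd, hVnorm, one_mul]
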